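/- For all complex x, y with |x| < 1/(1−q) and |y| < 1/(1−q), the series ∑_{n=0}^∞ (x ⊕_q y)^{2n+1}/[2n+1]_q! converges absolutely and equals cosh_q(x) sinh_q(y) + sinh_q(x) cosh_q(y). -/

import Mathlib

open Finset Filter

/-- The q-number `[n]_q = (1 - q^n)/(1 - q)`. -/
noncomputable def qNum (q : ℝ) (n : ℕ) : ℝ := (1 - q ^ n) / (1 - q)

/-- The q-factorial `[n]_q! = ∏_{k=1}^n [k]_q`. -/
noncomputable def qFact (q : ℝ) (n : ℕ) : ℝ := ∏ k ∈ Finset.range n, qNum q (k + 1)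

/-- The q-binomial coefficient `[n choose k]_q`. -/
noncomputable def qBinom (q : ℝ) (n k : ℕ) : ℝ := qFact q n / (qFact q k * qFact q (n - k))

/-- The Ward q-addition power `(x ⊕_q y)^n = ∑_{k=0}^n [n choose k]_q x^k y^(n-k)`. -/
noncomputable def wardPow (q : ℝ) (x y : ℂ) (n : ℕ) : ℂ :=
  ∑ k ∈ Finset.range (n + 1), (qBinom q n k : ℂ) * x ^ k * y ^ (n - k)

/-- The q-hyperbolic cosine `cosh_q(z) = ∑ z^(2n)/[2n]_q!`. -/
noncomputable def qCosh (q : ℝ) (z : ℂ) : ℂ := ∑' n : ℕ, z ^ (2 * n) / (qFact q (2 * n) : ℂ)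

/-- The q-hyperbolic sine `sinh_q(z) = ∑ z^(2n+1)/[2n+1]_q!`. -/
noncomputable def qSinh (q : ℝ) (z : ℂ) : ℂ :=
  ∑' n : ℕ, z ^ (2 * n + 1) / (qFact q (2 * n + 1) : ℂ)

lemma qNum_pos {q : ℝ} (hq0 : 0 < q) (hq1 : q < 1) (n : ℕ) : 0 < qNum q (n + 1) := by
  have h1 : q ^ (n+1) < 1 := pow_lt_one₀ hq0.le hq1 (Nat.succ_ne_zero n)
  exact div_pos (by linarith) (by linarith)

lemma qFact_pos {q : ℝ} (hq0 : 0 < q) (hq1 : q < 1) (n : ℕ) : 0 < qFact q n :=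
  Finset.prod_pos fun k _ => qNum_pos hq0 hq1 k

lemma summable_norm_e {q : ℝ} (hq0 : 0 < q) (hq1 : q < 1) (z : ℂ)
    (hz : ‖z‖ < 1 / (1 - q)) :
    Summable (fun n : ℕ => ‖z ^ n / (qFact q n : ℂ)‖) := by
  have h1q : 0 < 1 - q := by linarith
  set c := ‖z‖ with hc
  have hc0 : 0 ≤ c := norm_nonneg z
  have hcq : (1 - q) * c < 1 := by
    rw [← lt_div_iff₀' h1q]; exact hz
  set r : ℝ := ((1 - q) * c + 1) / 2 with hr
  have hr1 : r < 1 := by rw [hr]; linarith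
  have hr0 : 0 < r := by rw [hr]; positivity
  have hkey : ∀ᶠ n : ℕ in atTop, c ≤ r * qNum q (n + 1) := by
    have htend : Tendsto (fun n : ℕ => q ^ (n + 1)) atTop (nhds 0) :=
      (tendsto_pow_atTop_nhds_zero_of_lt_one hq0.le hq1).comp (tendsto_add_atTop_nat 1)
    have hlt : (0:ℝ) < 1 - c * (1 - q) / r := by
      rw [sub_pos, div_lt_one hr0]; nlinarith
    filter_upwards [htend.eventually_le_const hlt] with n hn
    rw [qNum, mul_div_assoc' r, le_div_iff₀ h1q]
    have h2 : c * (1 - q) / r ≤ 1 - q ^ (n + 1) := by linarith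
    rw [div_le_iff₀ hr0] at h2
    nlinarith
  apply summable_of_ratio_norm_eventually_le hr1
  filter_upwards [hkey] with n hn
  have hfp := qFact_pos hq0 hq1 n
  have hnum := qNum_pos hq0 hq1 n
  have hfs : qFact q (n + 1) = qFact q n * qNum q (n + 1) := Finset.prod_range_succ _ _
  have e1 : ∀ m : ℕ, ‖z ^ m / (qFact q m : ℂ)‖ = c ^ m / qFact q m := by
    intro m
    rw [norm_div, norm_pow, Complex.norm_real,
      Real.norm_eq_abs, abs_of_pos (qFact_pos hq0 hq1 m)]
  rw [Real.norm_eq_abs, Real.norm_eq_abs, abs_of_nonneg (by positivity),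
    abs_of_nonneg (by positivity), e1, e1, hfs, pow_succ]
  rw [div_le_iff₀ (by positivity)]
  calc c ^ n * c ≤ c ^ n * (r * qNum q (n+1)) :=
        mul_le_mul_of_nonneg_left hn (by positivity)
    _ = r * (c ^ n / qFact q n) * (qFact q n * qNum q (n + 1)) := by
        field_simp

set_option maxRecDepth 8000 in
theorem stmt_4 (q : ℝ) (hq0 : 0 < q) (hq1 : q < 1) (x y : ℂ)
    (hx : ‖x‖ < 1 / (1 - q)) (hy : ‖y‖ < 1 / (1 - q)) :
    Summable (fun n : ℕ => ‖wardPow q x y (2 * n + 1) / (qFact q (2 * n + 1) : ℂ)‖) ∧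
      ∑' n : ℕ, wardPow q x y (2 * n + 1) / (qFact q (2 * n + 1) : ℂ) =
        qCosh q x * qSinh q y + qSinh q x * qCosh q y := by
  have h1q : 0 < 1 - q := by linarith
  set f : ℂ → ℕ → ℂ := fun z n => z ^ n / (qFact q n : ℂ) with hfdef
  have hnx : Summable (fun n => ‖f x n‖) := summable_norm_e hq0 hq1 x hx
  have hny : Summable (fun n => ‖f y n‖) := summable_norm_e hq0 hq1 y hy
  have hnx' : Summable (fun n => ‖f (-x) n‖) :=
    summable_norm_e hq0 hq1 (-x) (by rwa [norm_neg])
  have hny' : Summable (fun n => ‖f (-y) n‖) :=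
    summable_norm_e hq0 hq1 (-y) (by rwa [norm_neg])
  -- wardPow / fact is a Cauchy-product term
  have hw : ∀ z w : ℂ, ∀ n : ℕ, wardPow q z w n / (qFact q n : ℂ)
      = ∑ k ∈ Finset.range (n + 1), f z k * f w (n - k) := by
    intro z w n
    rw [wardPow, Finset.sum_div]
    refine Finset.sum_congr rfl fun k hk => ?_
    have hfk : (qFact q k : ℂ) ≠ 0 := Complex.ofReal_ne_zero.2 (qFact_pos hq0 hq1 k).ne'
    have hfnk : (qFact q (n - k) : ℂ) ≠ 0 :=
      Complex.ofReal_ne_zero.2 (qFact_pos hq0 hq1 (n - k)).ne'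
    have hfn : (qFact q n : ℂ) ≠ 0 := Complex.ofReal_ne_zero.2 (qFact_pos hq0 hq1 n).ne'
    simp only [hfdef, qBinom]
    push_cast
    field_simp
  set h : ℕ → ℂ := fun n => ∑ k ∈ Finset.range (n + 1), f x k * f y (n - k) with hhdef
  have hsign : ∀ n : ℕ,
      (∑ k ∈ Finset.range (n + 1), f (-x) k * f (-y) (n - k)) = (-1 : ℂ) ^ n * h n := by
    intro n
    rw [hhdef, Finset.mul_sum]
    refine Finset.sum_congr rfl fun k hk => ?_
    have hk' : k ≤ n := Nat.lt_succ_iff.1 (Finset.mem_range.1 hk)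
    have hpow : ((-1 : ℂ)) ^ k * ((-1 : ℂ)) ^ (n - k) = (-1 : ℂ) ^ n := by
      rw [← pow_add, Nat.add_sub_cancel' hk']
    have e1 : (-x) ^ k = (-1 : ℂ) ^ k * x ^ k := by rw [neg_pow]
    have e2 : (-y) ^ (n - k) = (-1 : ℂ) ^ (n - k) * y ^ (n - k) := by rw [neg_pow]
    simp only [hfdef]
    rw [e1, e2, ← hpow]
    ring
  have hSnorm : Summable (fun n => ‖h n‖) :=
    summable_norm_sum_mul_range_of_summable_norm hnx hny
  have hS : Summable h := hSnorm.of_norm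
  have inje : Function.Injective (fun n : ℕ => 2 * n) := fun a b hab => by dsimp at hab; omega
  have injo : Function.Injective (fun n : ℕ => 2 * n + 1) := fun a b hab => by dsimp at hab; omega
  have hEvenS : Summable (fun k => h (2 * k)) := hS.comp_injective inje
  have hOddS : Summable (fun k => h (2 * k + 1)) := hS.comp_injective injo
  constructor
  · have := hSnorm.comp_injective injo
    simp only [hw x y]
    exact this
  -- parity decomposition of the q-exponential
  have hE : ∀ z : ℂ, Summable (fun n => ‖f z n‖) →
      qCosh q z + qSinh q z = ∑' n, f z n := by
    intro z hz
    have h2 : Summable (fun k => f z (2 * k)) :=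
      hz.of_norm.comp_injective inje
    have h3 : Summable (fun k => f z (2 * k + 1)) :=
      hz.of_norm.comp_injective injo
    exact tsum_even_add_odd h2 h3
  have hEx := hE x hnx
  have hEy := hE y hny
  have hEmx := hE (-x) hnx'
  have hEmy := hE (-y) hny'
  have hCx : ∀ z : ℂ, qCosh q (-z) = qCosh q z := by
    intro z
    rw [qCosh, qCosh]
    congr 1; funext n
    rw [Even.neg_pow (even_two_mul n)]
  have hSx : ∀ z : ℂ, qSinh q (-z) = -qSinh q z := by
    intro z
    rw [qSinh, qSinh, ← tsum_neg]
    congr 1; funext n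
    rw [Odd.neg_pow (odd_two_mul_add_one n), neg_div]
  rw [hCx, hSx] at hEmx hEmy
  -- Cauchy products
  have hprod : (∑' n, f x n) * (∑' n, f y n) = ∑' n, h n :=
    tsum_mul_tsum_eq_tsum_sum_range_of_summable_norm hnx hny
  have hprod' : (∑' n, f (-x) n) * (∑' n, f (-y) n) = ∑' n, (-1 : ℂ) ^ n * h n := by
    rw [tsum_mul_tsum_eq_tsum_sum_range_of_summable_norm hnx' hny']
    exact tsum_congr hsign
  -- even/odd split of the two Cauchy products
  have hneg1 : ∀ k : ℕ, ((-1 : ℂ)) ^ (2 * k) = 1 := fun k => by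
    rw [pow_mul]; norm_num
  have hneg2 : ∀ k : ℕ, ((-1 : ℂ)) ^ (2 * k + 1) = -1 := fun k => by
    rw [pow_succ, hneg1]; norm_num
  have hsplit : (∑' k, h (2 * k)) + ∑' k, h (2 * k + 1) = ∑' n, h n :=
    tsum_even_add_odd hEvenS hOddS
  have hsplit' : (∑' k, h (2 * k)) - ∑' k, h (2 * k + 1) = ∑' n, (-1 : ℂ) ^ n * h n := by
    have he : Summable (fun k => (-1 : ℂ) ^ (2 * k) * h (2 * k)) := by
      simpa [hneg1] using hEvenS
    have ho : Summable (fun k => (-1 : ℂ) ^ (2 * k + 1) * h (2 * k + 1)) := by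
      simpa [hneg2] using hOddS.neg
    have := tsum_even_add_odd (f := fun n => (-1 : ℂ) ^ n * h n) he ho
    simp only [hneg1, hneg2, one_mul, neg_one_mul] at this
    rw [tsum_neg] at this
    rw [sub_eq_add_neg]
    exact this
  have eq1 : (∑' k, h (2 * k)) + ∑' k, h (2 * k + 1)
      = (qCosh q x + qSinh q x) * (qCosh q y + qSinh q y) := by
    rw [hsplit, ← hprod, ← hEx, ← hEy]
  have eq2 : (∑' k, h (2 * k)) - ∑' k, h (2 * k + 1)
      = (qCosh q x + -qSinh q x) * (qCosh q y + -qSinh q y) := by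
    rw [hsplit', ← hprod', ← hEmx, ← hEmy]
  have key : ∑' k, h (2 * k + 1) = qCosh q x * qSinh q y + qSinh q x * qCosh q y := by
    linear_combination (eq1 - eq2) / 2
  calc ∑' n : ℕ, wardPow q x y (2 * n + 1) / (qFact q (2 * n + 1) : ℂ)
      = ∑' k, h (2 * k + 1) := tsum_congr fun n => hw x y (2 * n + 1)
    _ = _ := key
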